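/- arXiv:1301.3581 — 4 statements merged into one kernel-verified Lean document; each statement's English description precedes it below -/
import Mathlib

section
/- Fix 1 ≤ i < j ≤ m and nonnegative integers n_1,...,n_m, and let s = n_i + n_j. Define f_{ij}(z) = det(X' W_n(z) X) where W_n(z) = diag(n_1 w_1, ..., z w_i, ..., (s-z) w_j, ..., n_m w_m) replaces the i-th and j-th diagonal entries by z w_i and (s-z) w_j. Then f_{ij}(z) = A·z·(s-z) + B·z + C·(s-z) + D for some constants A, B, C, D, with D = f_{ij} evaluated with both i-th and j-th counts set to 0, and if s > 0 then A = (2/s²)(2 f_{ij}(s/2) - f_{ij}(0) - f_{ij}(s)), B = (f_{ij}(s) - D)/s, C = (f_{ij}(0) - D)/s. -/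
open Matrix

/-- Expanding the determinant of a matrix plus a rank-one perturbation (given row-wise). -/
lemma my_det_add_rows {d : ℕ} (M : Matrix (Fin d) (Fin d) ℝ) (c v : Fin d → ℝ) :
    (M + Matrix.of fun p q => c p * v q).det
      = M.det + ∑ p, c p * (M.updateRow p v).det := by
  classical
  set mm : Matrix (Fin d) (Fin d) ℝ := Matrix.of fun p q => c p * v q with hmm
  have key : (Matrix.detRowAlternating (n := Fin d) (R := ℝ)).toMultilinearMap
        ((fun p => mm p) + (fun p => M p))
      = ∑ s : Finset (Fin d),
          (Matrix.detRowAlternating (n := Fin d) (R := ℝ)).toMultilinearMap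
            (s.piecewise (fun p => mm p) (fun p => M p)) :=
    MultilinearMap.map_add_univ _ _ _
  have hdet : (M + mm).det
      = ∑ s : Finset (Fin d),
          Matrix.det (Matrix.of (s.piecewise (fun p => mm p) (fun p => M p))) := by
    have : M + mm = Matrix.of ((fun p => mm p) + (fun p => M p)) := by
      ext p q; simp [Matrix.add_apply, add_comm]
    rw [this]
    exact key
  have hzero : ∀ s : Finset (Fin d), 1 < s.card →
      Matrix.det (Matrix.of (s.piecewise (fun p => mm p) (fun p => M p))) = 0 := by
    intro s hs
    obtain ⟨p, hp, q, hq, hpq⟩ := Finset.one_lt_card.mp hs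
    set N : Matrix (Fin d) (Fin d) ℝ :=
      Matrix.of (s.piecewise (fun p => mm p) (fun p => M p)) with hN
    have hNp : N p = c p • v := by
      funext r
      simp [hN, Finset.piecewise_eq_of_mem _ _ _ hp, hmm]
    have hNq : N q = c q • v := by
      funext r
      simp [hN, Finset.piecewise_eq_of_mem _ _ _ hq, hmm]
    have h1 : N = N.updateRow p (c p • v) := by
      rw [← hNp, Matrix.updateRow_eq_self]
    rw [h1, Matrix.det_updateRow_smul]
    have h2 : N.updateRow p v = (N.updateRow p v).updateRow q (c q • v) := by
      have : (N.updateRow p v) q = c q • v := by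
        rw [Matrix.updateRow_ne hpq.symm, hNq]
      rw [← this, Matrix.updateRow_eq_self]
    rw [h2, Matrix.det_updateRow_smul]
    have h3 : ((N.updateRow p v).updateRow q v) p = ((N.updateRow p v).updateRow q v) q := by
      rw [Matrix.updateRow_ne hpq, Matrix.updateRow_self, Matrix.updateRow_self]
    rw [Matrix.det_zero_of_row_eq hpq h3]
    simp
  set T : Finset (Finset (Fin d)) :=
    insert ∅ (Finset.univ.image fun p : Fin d => ({p} : Finset (Fin d))) with hT
  have hTsum : ∑ s : Finset (Fin d),
        Matrix.det (Matrix.of (s.piecewise (fun p => mm p) (fun p => M p)))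
      = ∑ s ∈ T, Matrix.det (Matrix.of (s.piecewise (fun p => mm p) (fun p => M p))) := by
    refine (Finset.sum_subset (Finset.subset_univ T) ?_).symm
    intro s _ hsT
    refine hzero s ?_
    by_contra hcard
    push_neg at hcard
    have hc : s.card = 0 ∨ s.card = 1 := by omega
    rcases hc with h | h
    · exact hsT (by simp [hT, Finset.card_eq_zero.mp h])
    · obtain ⟨p, hp⟩ := Finset.card_eq_one.mp h
      exact hsT (by simp [hT, hp])
  have hempty : Matrix.det (Matrix.of ((∅ : Finset (Fin d)).piecewise (fun p => mm p) (fun p => M p))) = M.det := by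
    congr 1
  have hsingle : ∀ p : Fin d,
      Matrix.det (Matrix.of (({p} : Finset (Fin d)).piecewise (fun p => mm p) (fun p => M p)))
        = c p * (M.updateRow p v).det := by
    intro p
    have : Matrix.of (({p} : Finset (Fin d)).piecewise (fun p => mm p) (fun p => M p))
        = M.updateRow p (c p • v) := by
      ext r q
      by_cases hrp : r = p
      · subst hrp; simp [Finset.piecewise_eq_of_mem, hmm]
      · simp [Finset.piecewise_eq_of_notMem, hrp, Matrix.updateRow_ne hrp]
    rw [this, Matrix.det_updateRow_smul]
  have hnotin : (∅ : Finset (Fin d)) ∉ Finset.univ.image fun p : Fin d => ({p} : Finset (Fin d)) := by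
    simp
  rw [hdet, hTsum, hT, Finset.sum_insert hnotin, hempty,
    Finset.sum_image (by intro x _ y _ h; exact Finset.singleton_injective h)]
  congr 1
  exact Finset.sum_congr rfl fun p _ => hsingle p

/-- Determinant of a matrix plus two scaled rank-one perturbations is multiaffine. -/
lemma my_det_two_rankone {d : ℕ} (M : Matrix (Fin d) (Fin d) ℝ) (u1 v1 u2 v2 : Fin d → ℝ) :
    ∃ A B C : ℝ, ∀ a b : ℝ,
      (M + Matrix.of (fun p q => a * u1 p * v1 q) + Matrix.of (fun p q => b * u2 p * v2 q)).det
        = A * (a * b) + B * a + C * b + M.det := by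
  classical
  refine ⟨∑ p, u1 p * ∑ q, (if q = p then 0 else u2 q) * (((M.updateRow p v1).updateRow q v2).det),
          ∑ p, u1 p * (M.updateRow p v1).det,
          ∑ p, u2 p * (M.updateRow p v2).det, ?_⟩
  intro a b
  have h1 : M + Matrix.of (fun p q => a * u1 p * v1 q) + Matrix.of (fun p q => b * u2 p * v2 q)
      = (M + Matrix.of (fun p q => (b * u2 p) * v2 q)) + Matrix.of (fun p q => (a * u1 p) * v1 q) := by
    ext p q
    simp [Matrix.add_apply]
    ring
  rw [h1, my_det_add_rows _ (fun p => a * u1 p) v1,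
    my_det_add_rows M (fun p => b * u2 p) v2]
  have h3 : ∀ p : Fin d,
      ((M + Matrix.of (fun p q => (b * u2 p) * v2 q)).updateRow p v1).det
        = (M.updateRow p v1).det
          + b * ∑ q, (if q = p then 0 else u2 q) * (((M.updateRow p v1).updateRow q v2).det) := by
    intro p
    have h2 : (M + Matrix.of (fun p q => (b * u2 p) * v2 q)).updateRow p v1
        = M.updateRow p v1 + Matrix.of (fun q r => (b * (if q = p then 0 else u2 q)) * v2 r) := by
      ext q r
      by_cases hqp : q = p
      · subst hqp
        simp [Matrix.updateRow_self, Matrix.add_apply]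
      · simp [Matrix.updateRow_ne hqp, Matrix.add_apply, hqp]
    rw [h2, my_det_add_rows]
    rw [Finset.mul_sum]
    congr 1
    exact Finset.sum_congr rfl fun q _ => by ring
  calc (M.det + ∑ p, b * u2 p * (M.updateRow p v2).det)
        + ∑ p, a * u1 p * ((M + Matrix.of (fun p q => (b * u2 p) * v2 q)).updateRow p v1).det
      = (M.det + ∑ p, b * u2 p * (M.updateRow p v2).det)
        + ∑ p, a * u1 p * ((M.updateRow p v1).det
          + b * ∑ q, (if q = p then 0 else u2 q) * (((M.updateRow p v1).updateRow q v2).det)) := by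
        congr 1
        exact Finset.sum_congr rfl fun p _ => by rw [h3 p]
    _ = M.det + ∑ p, (b * u2 p * (M.updateRow p v2).det
          + a * u1 p * ((M.updateRow p v1).det
            + b * ∑ q, (if q = p then 0 else u2 q) * (((M.updateRow p v1).updateRow q v2).det))) := by
        rw [add_assoc, ← Finset.sum_add_distrib]
    _ = (∑ p, ((u1 p * ∑ q, (if q = p then 0 else u2 q)
              * (((M.updateRow p v1).updateRow q v2).det)) * (a * b)
          + (u1 p * (M.updateRow p v1).det) * a
          + (u2 p * (M.updateRow p v2).det) * b)) + M.det := by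
        rw [add_comm]
        congr 1
        exact Finset.sum_congr rfl fun p _ => by ring
    _ = _ := by
        rw [Finset.sum_add_distrib, Finset.sum_add_distrib, ← Finset.sum_mul, ← Finset.sum_mul,
          ← Finset.sum_mul]

noncomputable def Fij (m d : ℕ) (X : Matrix (Fin m) (Fin d) ℝ) (w : Fin m → ℝ)
    (n : Fin m → ℕ) (i j : Fin m) (z : ℝ) : ℝ :=
  (Xᵀ * Matrix.diagonal
      (fun k => (if k = i then z else if k = j then ((n i : ℝ) + n j) - z else (n k : ℝ)) * w k)
    * X).det

/-- f_{ij}(z) = A z(s-z) + B z + C(s-z) + D where D is the criterion value with both the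
i-th and j-th counts set to 0, and, if s > 0, A = (2/s²)(2f_{ij}(s/2) - f_{ij}(0) - f_{ij}(s)),
B = (f_{ij}(s) - D)/s, C = (f_{ij}(0) - D)/s. -/
theorem exchange_quadratic_form (m d : ℕ) (X : Matrix (Fin m) (Fin d) ℝ)
    (w : Fin m → ℝ) (hw : ∀ k, 0 < w k) (n : Fin m → ℕ) (i j : Fin m) (hij : i < j) :
    ∃ A B C D : ℝ,
      (∀ z : ℝ, Fij m d X w n i j z =
        A * z * (((n i : ℝ) + n j) - z) + B * z + C * (((n i : ℝ) + n j) - z) + D) ∧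
      D = (Xᵀ * Matrix.diagonal
            (fun k => (if k = i then 0 else if k = j then 0 else (n k : ℝ)) * w k) * X).det ∧
      (0 < n i + n j →
        A = 2 / ((n i : ℝ) + n j) ^ 2 *
              (2 * Fij m d X w n i j (((n i : ℝ) + n j) / 2)
                - Fij m d X w n i j 0 - Fij m d X w n i j ((n i : ℝ) + n j)) ∧
        B = (Fij m d X w n i j ((n i : ℝ) + n j) - D) / ((n i : ℝ) + n j) ∧
        C = (Fij m d X w n i j 0 - D) / ((n i : ℝ) + n j)) := by
  classical
  have hijne : i ≠ j := ne_of_lt hij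
  set s : ℝ := (n i : ℝ) + n j with hs
  set M00 : Matrix (Fin d) (Fin d) ℝ := Xᵀ * Matrix.diagonal
      (fun k => (if k = i then 0 else if k = j then 0 else (n k : ℝ)) * w k) * X with hM00
  set u1 : Fin d → ℝ := fun p => X i p * w i with hu1
  set v1 : Fin d → ℝ := fun q => X i q with hv1
  set u2 : Fin d → ℝ := fun p => X j p * w j with hu2
  set v2 : Fin d → ℝ := fun q => X j q with hv2
  have hkey : ∀ z : ℝ, Fij m d X w n i j z
      = (M00 + Matrix.of (fun p q => z * u1 p * v1 q)
          + Matrix.of (fun p q => (s - z) * u2 p * v2 q)).det := by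
    intro z
    show (Xᵀ * Matrix.diagonal
        (fun k => (if k = i then z else if k = j then s - z else (n k : ℝ)) * w k) * X).det = _
    congr 1
    ext p q
    have expand : ∀ e : Fin m → ℝ,
        (Xᵀ * Matrix.diagonal e * X) p q = ∑ k, X k p * e k * X k q := by
      intro e
      rw [Matrix.mul_apply]
      refine Finset.sum_congr rfl fun k _ => ?_
      rw [Matrix.mul_diagonal, Matrix.transpose_apply]
    rw [Matrix.add_apply, Matrix.add_apply, Matrix.of_apply, Matrix.of_apply, hM00,
      expand _, expand _]
    have hterm : ∀ k : Fin m,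
        X k p * ((if k = i then z else if k = j then s - z else (n k : ℝ)) * w k) * X k q
          = X k p * ((if k = i then 0 else if k = j then 0 else (n k : ℝ)) * w k) * X k q
            + ((if k = i then z * u1 p * v1 q else 0)
            + (if k = j then (s - z) * u2 p * v2 q else 0)) := by
      intro k
      by_cases hki : k = i
      · subst hki
        rw [if_pos rfl, if_pos rfl, if_pos rfl, if_neg hijne]
        simp only [hu1, hv1]
        ring
      · by_cases hkj : k = j
        · subst hkj
          rw [if_neg hki, if_neg hki, if_neg hki, if_pos rfl, if_pos rfl, if_pos rfl]
          simp only [hu2, hv2]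
          ring
        · rw [if_neg hki, if_neg hki, if_neg hki, if_neg hkj, if_neg hkj, if_neg hkj]
          ring
    rw [Finset.sum_congr rfl fun k _ => hterm k, Finset.sum_add_distrib,
      Finset.sum_add_distrib, Finset.sum_ite_eq' Finset.univ i, Finset.sum_ite_eq' Finset.univ j]
    simp [add_assoc]
  obtain ⟨A, B, C, hABC⟩ := my_det_two_rankone M00 u1 v1 u2 v2
  have hform : ∀ z : ℝ, Fij m d X w n i j z
      = A * z * (s - z) + B * z + C * (s - z) + M00.det := by
    intro z
    rw [hkey z, hABC z (s - z)]
    ring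
  refine ⟨A, B, C, M00.det, hform, rfl, ?_⟩
  intro hpos
  have hs0 : s ≠ 0 := by
    have : (0 : ℝ) < s := by
      rw [hs]
      have : 0 < ((n i + n j : ℕ) : ℝ) := by exact_mod_cast hpos
      push_cast at this
      linarith
    linarith
  have h0 := hform 0
  have hsv := hform s
  have hh := hform (s / 2)
  refine ⟨?_, ?_, ?_⟩
  · rw [h0, hsv, hh]
    field_simp
    ring
  · rw [hsv]
    field_simp
    ring
  · rw [h0]
    field_simp
    ring
end

section
/- Define f_i(z) = f((1-z)/(1-p_i)·p_1, ..., z (in position i), ..., (1-z)/(1-p_i)·p_m) for 0 ≤ z ≤ 1, where f(p) = det(X'diag(p_1w_1,...,p_mw_m)X) and p_i < 1. Then f_i(z) = a·z·(1-z)^{d-1} + b·(1-z)^d for some constants a ≥ 0 and b ≥ 0; moreover b = f_i(0), and if p_i > 0 then a = (f(p) - b(1-p_i)^d)/(p_i(1-p_i)^{d-1}), while if p_i = 0 then a = 2^d·f_i(1/2) - b. -/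
open Matrix

/-- The D-criterion f(p) = det(Xᵀ diag(p₁w₁,...,pₘwₘ) X). -/
noncomputable def fdet (m d : ℕ) (X : Matrix (Fin m) (Fin d) ℝ) (w p : Fin m → ℝ) : ℝ :=
  (Xᵀ * Matrix.diagonal (fun i => p i * w i) * X).det

/-- The lift-one function fᵢ(z): pᵢ is replaced by z and the other coordinates are
rescaled by (1-z)/(1-pᵢ). -/
noncomputable def liftOne (m d : ℕ) (X : Matrix (Fin m) (Fin d) ℝ) (w p : Fin m → ℝ)
    (i : Fin m) (z : ℝ) : ℝ :=
  fdet m d X w (fun k => if k = i then z else (1 - z) / (1 - p i) * p k)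

section AuxLemmas
open Polynomial

lemma eval_det' {n : Type*} [Fintype n] [DecidableEq n] (ε : ℝ) (M : Matrix n n ℝ[X]) :
    Polynomial.eval ε M.det = (M.map (Polynomial.eval ε)).det := by
  have := (Polynomial.evalRingHom ε).map_det M
  simpa [RingHom.mapMatrix_apply, Polynomial.coe_evalRingHom] using this

lemma eval_adjugate' {n : Type*} [Fintype n] [DecidableEq n] (ε : ℝ) (M : Matrix n n ℝ[X]) :
    M.adjugate.map (Polynomial.eval ε) = (M.map (Polynomial.eval ε)).adjugate := by
  have := (Polynomial.evalRingHom ε).map_adjugate M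
  simpa [RingHom.mapMatrix_apply, Polynomial.coe_evalRingHom] using this

lemma eval_dot {n : Type*} [Fintype n] (ε : ℝ) (v u : n → ℝ) (A : Matrix n n ℝ[X]) :
    Polynomial.eval ε ((fun j => C (v j)) ⬝ᵥ A *ᵥ (fun j => C (u j)))
      = v ⬝ᵥ (A.map (Polynomial.eval ε)) *ᵥ u := by
  simp [dotProduct, Matrix.mulVec, Finset.mul_sum, eval_finset_sum]

lemma det_add_col_mul_row_gen {n : Type*} [Fintype n] [DecidableEq n]
    (B : Matrix n n ℝ) (u v : n → ℝ) :
    (B + Matrix.replicateCol Unit u * Matrix.replicateRow Unit v).det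
      = B.det + v ⬝ᵥ (B.adjugate *ᵥ u) := by
  classical
  set Bp : Matrix n n ℝ[X] := Matrix.diagonal (fun _ => (X : ℝ[X])) + B.map C with hBpdef
  set up : n → ℝ[X] := fun j => C (u j)
  set vp : n → ℝ[X] := fun j => C (v j)
  set P : ℝ[X] := (Bp + Matrix.replicateCol Unit up * Matrix.replicateRow Unit vp).det
      - Bp.det - vp ⬝ᵥ (Bp.adjugate *ᵥ up) with hP
  have hmapB : ∀ ε : ℝ, Bp.map (Polynomial.eval ε) = Matrix.diagonal (fun _ => ε) + B := by
    intro ε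
    ext j k
    by_cases h : j = k <;> simp [hBpdef, h, Matrix.diagonal, Matrix.map]
  have hmapFull : ∀ ε : ℝ, (Bp + Matrix.replicateCol Unit up * Matrix.replicateRow Unit vp).map (Polynomial.eval ε)
      = (Matrix.diagonal (fun _ => ε) + B) + Matrix.replicateCol Unit u * Matrix.replicateRow Unit v := by
    intro ε
    ext j k
    have h2 : (Matrix.replicateCol Unit up * Matrix.replicateRow Unit vp) j k = C (u j * v k) := by
      simp [Matrix.mul_apply, Matrix.replicateCol, Matrix.replicateRow, up, vp]
    simp only [Matrix.map_apply, Matrix.add_apply, eval_add, h2, eval_C]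
    congr 1
    · have := congrFun (congrFun (hmapB ε) j) k
      simpa [Matrix.map_apply] using this
    · simp [Matrix.mul_apply, Matrix.replicateCol, Matrix.replicateRow]
  have hevalP : ∀ ε : ℝ, Polynomial.eval ε P
      = ((Matrix.diagonal (fun _ => ε) + B) + Matrix.replicateCol Unit u * Matrix.replicateRow Unit v).det
        - (Matrix.diagonal (fun _ => ε) + B).det
        - v ⬝ᵥ ((Matrix.diagonal (fun _ => ε) + B).adjugate *ᵥ u) := by
    intro ε
    have h1 : Polynomial.eval ε (Bp + Matrix.replicateCol Unit up * Matrix.replicateRow Unit vp).det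
        = ((Matrix.diagonal (fun _ => ε) + B) + Matrix.replicateCol Unit u * Matrix.replicateRow Unit v).det := by
      rw [eval_det', hmapFull ε]
    have h2 : Polynomial.eval ε Bp.det = (Matrix.diagonal (fun _ => ε) + B).det := by
      rw [eval_det', hmapB ε]
    have h3 : Polynomial.eval ε (vp ⬝ᵥ (Bp.adjugate *ᵥ up))
        = v ⬝ᵥ ((Matrix.diagonal (fun _ => ε) + B).adjugate *ᵥ u) := by
      rw [show vp = fun j => C (v j) from rfl, show up = fun j => C (u j) from rfl,
        eval_dot, eval_adjugate', hmapB ε]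
    simp [hP, h1, h2, h3]
  have hBpchar : Bp = charmatrix (-B) := by
    ext j k
    by_cases h : j = k <;> simp [hBpdef, h, Matrix.diagonal, Matrix.map, charmatrix_apply]
  have hBpne : Bp.det ≠ 0 := by
    rw [hBpchar]
    exact (Matrix.charpoly_monic (-B)).ne_zero
  have hroot : ∀ ε : ℝ, ¬ Bp.det.IsRoot ε → P.IsRoot ε := by
    intro ε hε
    have hdet : (Matrix.diagonal (fun _ => ε) + B).det ≠ 0 := by
      intro h
      apply hε
      have h2 : Polynomial.eval ε Bp.det = (Matrix.diagonal (fun _ => ε) + B).det := by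
        rw [eval_det', hmapB ε]
      simpa [Polynomial.IsRoot, h2] using h
    set Bε := Matrix.diagonal (fun _ => ε) + B with hBε
    have hUnit : IsUnit Bε.det := isUnit_iff_ne_zero.mpr hdet
    have hkey : (Bε + Matrix.replicateCol Unit u * Matrix.replicateRow Unit v).det
        = Bε.det + v ⬝ᵥ (Bε.adjugate *ᵥ u) := by
      rw [Matrix.det_add_replicateCol_mul_replicateRow hUnit u v]
      have hone : (1 + Matrix.replicateRow Unit v * Bε⁻¹ * Matrix.replicateCol Unit u).det
          = 1 + v ⬝ᵥ Bε⁻¹ *ᵥ u := by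
        rw [Matrix.det_unique, Matrix.add_apply, Matrix.one_apply_eq, ← Matrix.replicateRow_vecMul,
          Matrix.replicateRow_mul_replicateCol_apply, ← Matrix.dotProduct_mulVec]
      rw [hone]
      have hadj : Bε.det • Bε⁻¹ = Bε.adjugate := by
        rw [Matrix.inv_def, smul_smul, Ring.inverse_eq_inv, mul_inv_cancel₀ hdet, one_smul]
      rw [mul_add, mul_one, ← hadj, Matrix.smul_mulVec, dotProduct_smul, smul_eq_mul]
    show Polynomial.eval ε P = 0
    rw [hevalP ε, ← hBε, hkey]
    ring
  have hPzero : P = 0 := by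
    apply Polynomial.eq_zero_of_infinite_isRoot
    apply Set.Infinite.mono (s := {x | Polynomial.IsRoot Bp.det x}ᶜ)
    · intro x hx; exact hroot x hx
    · exact Set.Finite.infinite_compl (Polynomial.finite_setOf_isRoot hBpne)
  have hfin := hevalP 0
  rw [hPzero] at hfin
  simp only [Polynomial.eval_zero] at hfin
  have hzero : Matrix.diagonal (fun _ : n => (0:ℝ)) + B = B := by
    simp [Matrix.diagonal_zero]
  rw [hzero] at hfin
  linarith [hfin]

lemma det_add_smul_col_mul_row_gen {n : Type*} [Fintype n] [DecidableEq n]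
    (B : Matrix n n ℝ) (u v : n → ℝ) (t : ℝ) :
    (B + t • (Matrix.replicateCol Unit u * Matrix.replicateRow Unit v)).det
      = B.det + t * (v ⬝ᵥ (B.adjugate *ᵥ u)) := by
  have h1 : t • (Matrix.replicateCol Unit u * Matrix.replicateRow Unit v)
      = Matrix.replicateCol Unit (t • u) * Matrix.replicateRow Unit v := by
    ext j k
    simp [Matrix.mul_apply, Matrix.replicateCol, Matrix.replicateRow, mul_assoc]
  rw [h1, det_add_col_mul_row_gen, Matrix.mulVec_smul, dotProduct_smul, smul_eq_mul]

lemma psd_det_nonneg {n : Type*} [Fintype n] [DecidableEq n] {A : Matrix n n ℝ}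
    (hA : A.PosSemidef) : 0 ≤ A.det := by
  rw [hA.1.det_eq_prod_eigenvalues]
  exact Finset.prod_nonneg fun i _ => by simpa using hA.eigenvalues_nonneg i

lemma Xdiag_det_nonneg {m d : ℕ} (X : Matrix (Fin m) (Fin d) ℝ) (e : Fin m → ℝ)
    (he : ∀ k, 0 ≤ e k) : 0 ≤ (Xᵀ * Matrix.diagonal e * X).det := by
  have h1 : (Matrix.diagonal e).PosSemidef := Matrix.posSemidef_diagonal_iff.mpr he
  have h2 := h1.conjTranspose_mul_mul_same X
  have h3 : Xᴴ = Xᵀ := by ext j k; simp [Matrix.conjTranspose_apply]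
  rw [h3] at h2
  exact psd_det_nonneg h2

end AuxLemmas

/-- fᵢ(z) = a z (1-z)^{d-1} + b (1-z)^d on [0,1] with a, b ≥ 0, where b = fᵢ(0);
if pᵢ > 0 then a = (f(p) - b(1-pᵢ)^d)/(pᵢ(1-pᵢ)^{d-1}), and if pᵢ = 0 then
a = 2^d fᵢ(1/2) - b. -/
theorem liftone_form (m d : ℕ) (X : Matrix (Fin m) (Fin d) ℝ) (w : Fin m → ℝ)
    (hw : ∀ k, 0 < w k) (p : Fin m → ℝ) (hp : ∀ k, 0 ≤ p k) (hp1 : ∑ k, p k = 1)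
    (hf : 0 < fdet m d X w p) (i : Fin m) (hpi : p i < 1) :
    ∃ a b : ℝ, 0 ≤ a ∧ 0 ≤ b ∧
      (∀ z ∈ Set.Icc (0:ℝ) 1,
        liftOne m d X w p i z = a * z * (1 - z) ^ (d - 1) + b * (1 - z) ^ d) ∧
      b = liftOne m d X w p i 0 ∧
      (0 < p i → a = (fdet m d X w p - b * (1 - p i) ^ d) / (p i * (1 - p i) ^ (d - 1))) ∧
      (p i = 0 → a = 2 ^ d * liftOne m d X w p i (1/2) - b) := by
  have hs : (0:ℝ) < 1 - p i := by linarith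
  -- the d = 0 case
  rcases Nat.eq_zero_or_pos d with hd | hd
  · subst hd
    have hone : ∀ q : Fin m → ℝ, fdet m 0 X w q = 1 := fun q => Matrix.det_isEmpty
    refine ⟨0, 1, le_refl 0, zero_le_one, ?_, ?_, ?_, ?_⟩
    · intro z _; simp [liftOne, hone]
    · simp [liftOne, hone]
    · intro _; simp [hone]
    · intro _; simp [liftOne, hone]
  -- main case d ≥ 1
  set e₁ : Fin m → ℝ := fun k => if k = i then w i else 0 with he₁
  set e₂ : Fin m → ℝ := fun k => (if k = i then 0 else p k / (1 - p i)) * w k with he₂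
  have he₁n : ∀ k, 0 ≤ e₁ k := by
    intro k; by_cases h : k = i <;> simp [he₁, h, (hw i).le]
  have he₂n : ∀ k, 0 ≤ e₂ k := by
    intro k; by_cases h : k = i <;>
      simp [he₂, h, mul_nonneg (div_nonneg (hp k) hs.le) (hw k).le]
  set CA : Matrix (Fin d) (Fin d) ℝ := Xᵀ * Matrix.diagonal e₁ * X with hCAdef
  set B : Matrix (Fin d) (Fin d) ℝ := Xᵀ * Matrix.diagonal e₂ * X with hBdef
  have hsplit : ∀ c₁ c₂ : ℝ, Xᵀ * Matrix.diagonal (fun k => c₁ * e₁ k + c₂ * e₂ k) * X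
      = c₁ • CA + c₂ • B := by
    intro c₁ c₂
    have hdg : Matrix.diagonal (fun k => c₁ * e₁ k + c₂ * e₂ k)
        = c₁ • Matrix.diagonal e₁ + c₂ • Matrix.diagonal e₂ := by
      ext j k
      by_cases h : j = k <;> simp [Matrix.diagonal, h]
    rw [hdg, Matrix.mul_add, Matrix.add_mul, Matrix.mul_smul, Matrix.smul_mul,
      Matrix.mul_smul, Matrix.smul_mul]
  have hlift : ∀ z : ℝ, liftOne m d X w p i z = (z • CA + (1 - z) • B).det := by
    intro z
    have harg : (fun k => (if k = i then z else (1 - z) / (1 - p i) * p k) * w k)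
        = fun k => z * e₁ k + (1 - z) * e₂ k := by
      funext k
      by_cases h : k = i
      · simp [he₁, he₂, h]
      · simp only [he₁, he₂, if_neg h]
        ring
    rw [liftOne, fdet, harg, hsplit]
  -- CA as a rank-one matrix
  set u : Fin d → ℝ := fun j => X i j with hu
  set v : Fin d → ℝ := fun j => w i * X i j with hv
  have hCA : CA = Matrix.replicateCol Unit u * Matrix.replicateRow Unit v := by
    have hXd : ∀ j r, (Xᵀ * Matrix.diagonal e₁) j r = X r j * e₁ r := by
      intro j r
      rw [Matrix.mul_diagonal, Matrix.transpose_apply]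
    ext j k
    rw [hCAdef, Matrix.mul_apply]
    simp only [hXd]
    rw [Finset.sum_eq_single i]
    · simp [he₁, hu, hv, Matrix.mul_apply, Matrix.replicateCol, Matrix.replicateRow]; ring
    · intro r _ hr; simp [he₁, if_neg hr]
    · intro h; exact absurd (Finset.mem_univ i) h
  set a : ℝ := v ⬝ᵥ (B.adjugate *ᵥ u) with ha
  set b : ℝ := B.det with hb
  have hg : ∀ t : ℝ, (B + t • CA).det = b + t * a := by
    intro t
    rw [hCA, det_add_smul_col_mul_row_gen]
  have hgn : ∀ t : ℝ, 0 ≤ t → 0 ≤ b + t * a := by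
    intro t ht
    rw [← hg t]
    have h1 : B + t • CA = Xᵀ * Matrix.diagonal (fun k => t * e₁ k + 1 * e₂ k) * X := by
      rw [hsplit, one_smul, add_comm]
    rw [h1]
    exact Xdiag_det_nonneg X _ (fun k => by
      have := he₁n k; have := he₂n k; nlinarith)
  have hb0 : 0 ≤ b := by simpa using hgn 0 le_rfl
  have ha0 : 0 ≤ a := by
    by_contra hneg
    push_neg at hneg
    have ht : (0:ℝ) ≤ (b + 1) / (-a) := div_nonneg (by linarith) (by linarith)
    have h2 := hgn _ ht
    have h4 : a / -a = -1 := by rw [div_neg, div_self (ne_of_lt hneg)]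
    have h3 : (b + 1) / (-a) * a = -(b + 1) := by
      calc (b + 1) / (-a) * a = (b + 1) * (a / -a) := by ring
        _ = -(b + 1) := by rw [h4]; ring
    rw [h3] at h2
    linarith
  -- the functional form, first for z ≠ 1
  have hform' : ∀ z : ℝ, z ≠ 1 →
      liftOne m d X w p i z = a * z * (1 - z) ^ (d - 1) + b * (1 - z) ^ d := by
    intro z hz
    have hz1 : (1:ℝ) - z ≠ 0 := fun h => hz (by linarith)
    have hzz : z • CA + (1 - z) • B = (1 - z) • (B + (z / (1 - z)) • CA) := by
      rw [smul_add, smul_smul, mul_div_cancel₀ _ hz1, add_comm]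
    rw [hlift, hzz, Matrix.det_smul, hg, Fintype.card_fin]
    have hpow : (1 - z) ^ d = (1 - z) ^ (d - 1) * (1 - z) := by
      rw [← pow_succ, Nat.sub_add_cancel hd]
    rw [hpow]
    field_simp
    ring
  -- extend to z = 1 by continuity
  have hform : ∀ z : ℝ,
      liftOne m d X w p i z = a * z * (1 - z) ^ (d - 1) + b * (1 - z) ^ d := by
    have hc1 : Continuous (fun z : ℝ => (z • CA + (1 - z) • B).det) := by
      apply Continuous.matrix_det
      exact ((continuous_id.smul continuous_const).add
        ((continuous_const.sub continuous_id).smul continuous_const))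
    have hc2 : Continuous (fun z : ℝ => a * z * (1 - z) ^ (d - 1) + b * (1 - z) ^ d) :=
      (((continuous_const.mul continuous_id).mul
        ((continuous_const.sub continuous_id).pow _)).add
        (continuous_const.mul ((continuous_const.sub continuous_id).pow _)))
    have hdense : Dense ({(1:ℝ)}ᶜ) := dense_compl_singleton 1
    have heq : (fun z : ℝ => (z • CA + (1 - z) • B).det)
        = fun z : ℝ => a * z * (1 - z) ^ (d - 1) + b * (1 - z) ^ d := by
      apply Continuous.ext_on hdense hc1 hc2
      intro z hz
      have hzne : z ≠ 1 := hz
      show (z • CA + (1 - z) • B).det = a * z * (1 - z) ^ (d - 1) + b * (1 - z) ^ d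
      rw [← hlift, hform' z hzne]
    intro z
    rw [hlift]
    exact congrFun heq z
  refine ⟨a, b, ha0, hb0, fun z _ => hform z, ?_, ?_, ?_⟩
  · rw [hform 0]; simp
  · intro hppos
    have hfp : fdet m d X w p = a * p i * (1 - p i) ^ (d - 1) + b * (1 - p i) ^ d := by
      have : fdet m d X w p = liftOne m d X w p i (p i) := by
        unfold liftOne
        congr 1
        funext k
        by_cases h : k = i
        · simp [h]
        · rw [if_neg h, div_self (ne_of_gt hs), one_mul]
      rw [this, hform]
    rw [hfp]
    have hne : p i * (1 - p i) ^ (d - 1) ≠ 0 := by positivity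
    rw [eq_div_iff hne]
    ring
  · intro _
    rw [hform (1/2)]
    have hhalf : ((1:ℝ) - 1/2) = 1/2 := by norm_num
    rw [hhalf]
    have h1 : (1/2:ℝ) * (1/2) ^ (d - 1) = (1/2) ^ d := by
      rw [← pow_succ', Nat.sub_add_cancel hd]
    have h2 : (2:ℝ) ^ d * (1/2) ^ d = 1 := by
      rw [← mul_pow]; norm_num
    have : a * (1/2) * (1/2:ℝ) ^ (d-1) = a * (1/2)^d := by
      rw [← h1]; ring
    rw [this]
    nlinarith [h2]
end

section
/- Let I = {i_1,...,i_d} ⊂ {1,...,m} with det(X[i_1,...,i_d]) ≠ 0. The saturated design p_I with p_{i_1} = ... = p_{i_d} = 1/d (and all other coordinates 0) maximizes f(p) = det(X'diag(p_1w_1,...,p_mw_m)X) over the probability simplex if and only if for each i ∉ I: Σ_{j ∈ I} det(X[{i} ∪ I \ {j}])² / w_j ≤ det(X[i_1,...,i_d])² / w_i. -/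
open Matrix

/-! ### Auxiliary lemmas -/

/-- AM-GM for PSD matrices: det ≤ (trace/n)^n. -/
private lemma amgm_psd {n : ℕ} (hn : 0 < n) {C : Matrix (Fin n) (Fin n) ℝ}
    (hC : C.PosSemidef) : C.det ≤ (C.trace / n) ^ n := by
  have hherm := hC.isHermitian
  have hlam : ∀ i, 0 ≤ hherm.eigenvalues i := hC.eigenvalues_nonneg
  have hdet : C.det = ∏ i, hherm.eigenvalues i := by
    simpa using hherm.det_eq_prod_eigenvalues
  have htr : C.trace = ∑ i, hherm.eigenvalues i := by
    simpa using hherm.trace_eq_sum_eigenvalues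
  rw [hdet, htr]
  set lam := hherm.eigenvalues
  have hw : ∀ i ∈ Finset.univ (α := Fin n), (0:ℝ) ≤ (n:ℝ)⁻¹ := fun i _ => by positivity
  have hw1 : ∑ _i : Fin n, ((n:ℝ))⁻¹ = 1 := by
    simp [Finset.sum_const, mul_inv_cancel₀ (show (n:ℝ) ≠ 0 by positivity)]
  have hgm := Real.geom_mean_le_arith_mean_weighted Finset.univ (fun _ => (n:ℝ)⁻¹) lam
    hw hw1 (fun i _ => hlam i)
  have hpow : (∏ i, lam i ^ ((n:ℝ))⁻¹) ^ n = ∏ i, lam i := by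
    rw [← Finset.prod_pow]
    refine Finset.prod_congr rfl fun i _ => ?_
    rw [← Real.rpow_natCast (lam i ^ ((n:ℝ))⁻¹) n, ← Real.rpow_mul (hlam i),
      inv_mul_cancel₀ (show (n:ℝ) ≠ 0 by positivity), Real.rpow_one]
  calc ∏ i, lam i = (∏ i, lam i ^ ((n:ℝ))⁻¹) ^ n := hpow.symm
    _ ≤ (∑ i, (n:ℝ)⁻¹ * lam i) ^ n := by
        apply pow_le_pow_left₀ (Finset.prod_nonneg fun i _ => Real.rpow_nonneg (hlam i) _) hgm
    _ = ((∑ i, lam i) / n) ^ n := by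
        rw [← Finset.mul_sum, div_eq_inv_mul]

/-- Key inequality: for A PSD with positive determinant and B PSD,
det B ≤ det A * (trace(A⁻¹B)/n)^n. -/
private lemma det_le_det_mul_trace_pow {n : ℕ} (hn : 0 < n) {A B : Matrix (Fin n) (Fin n) ℝ}
    (hA : A.PosSemidef) (hAdet : 0 < A.det) (hB : B.PosSemidef) :
    B.det ≤ A.det * ((A⁻¹ * B).trace / n) ^ n := by
  obtain ⟨S, hS, hSS⟩ : ∃ S : Matrix (Fin n) (Fin n) ℝ, S.PosSemidef ∧ S * S = A := by
    open scoped MatrixOrder in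
    exact ⟨CFC.sqrt A, (CFC.sqrt_nonneg A).posSemidef, CFC.sqrt_mul_sqrt_self A hA.nonneg⟩
  have hdetS : S.det * S.det = A.det := by rw [← det_mul, hSS]
  have hdetSne : S.det ≠ 0 := fun h => by simp [h] at hdetS; exact hAdet.ne' hdetS.symm
  have hConj : (S⁻¹ * B * (S⁻¹)ᴴ).PosSemidef := hB.mul_mul_conjTranspose_same (S⁻¹)
  have hSinvH : (S⁻¹)ᴴ = S⁻¹ := by
    rw [conjTranspose_nonsing_inv, hS.isHermitian.eq]
  rw [hSinvH] at hConj
  have hCineq := amgm_psd hn hConj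
  have hAinv : A⁻¹ = S⁻¹ * S⁻¹ := by rw [← hSS, Matrix.mul_inv_rev]
  have htr : (S⁻¹ * B * S⁻¹).trace = (A⁻¹ * B).trace := by
    rw [trace_mul_comm, ← mul_assoc, ← hAinv]
  have hdetC : (S⁻¹ * B * S⁻¹).det = S.det⁻¹ * B.det * S.det⁻¹ := by
    rw [det_mul, det_mul, det_nonsing_inv, Ring.inverse_eq_inv']
  have hfinal : B.det = A.det * (S⁻¹ * B * S⁻¹).det := by
    rw [hdetC]; field_simp; rw [← hdetS]; ring
  rw [hfinal]
  have := mul_le_mul_of_nonneg_left hCineq (le_of_lt hAdet)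
  calc A.det * (S⁻¹ * B * S⁻¹).det ≤ A.det * (((S⁻¹ * B * S⁻¹).trace) / n) ^ n := this
    _ = A.det * ((A⁻¹ * B).trace / n) ^ n := by rw [htr]

/-- Two row-submatrices selecting the same set of rows have equal squared determinant. -/
private lemma sq_det_submatrix_eq {m d : ℕ} (X : Matrix (Fin m) (Fin d) ℝ)
    {σ τ : Fin d → Fin m} (hσ : Function.Injective σ) (hτ : Function.Injective τ)
    (h : Set.range σ = Set.range τ) :
    (X.submatrix τ id).det ^ 2 = (X.submatrix σ id).det ^ 2 := by
  have h1 : ∀ k, τ k ∈ Set.range σ := fun k => h ▸ Set.mem_range_self k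
  choose g hg using h1
  have hginj : Function.Injective g := fun a b hab => hτ (by rw [← hg a, ← hg b, hab])
  have hgbij : Function.Bijective g := (Finite.injective_iff_bijective).1 hginj
  let e : Equiv.Perm (Fin d) := Equiv.ofBijective g hgbij
  have hfe : σ ∘ ⇑e = τ := funext hg
  have hsub : X.submatrix τ id = (X.submatrix σ id).submatrix (⇑e) id := by
    simp [submatrix_submatrix, hfe]
  rw [hsub, det_permute, mul_pow]
  rcases Int.units_eq_one_or (Equiv.Perm.sign e) with hs | hs <;> simp [hs]

private lemma gain_ineq {dd : ℕ} (hd : 1 ≤ dd) {g : ℝ} (hg : (dd:ℝ) < g) :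
    ∃ t : ℝ, 0 < t ∧ t < 1 ∧ 1 < (1-t)^(dd-1) * (1 - t + t*g) := by
  set D : ℝ := ((dd:ℝ) - 1) with hD
  have hdd1 : (1:ℝ) ≤ (dd:ℝ) := by exact_mod_cast hd
  have hD0 : 0 ≤ D := by simp [hD]; linarith
  have hg1 : (1:ℝ) < g := lt_of_le_of_lt hdd1 hg
  have hnum : 0 < g - dd := sub_pos.2 hg
  set den : ℝ := D * (g - 1) + (g - dd) + 1 with hden
  have hdenpos : 0 < den := by nlinarith
  set t : ℝ := (g - dd)/den with ht
  have ht0 : 0 < t := div_pos hnum hdenpos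
  have ht1 : t < 1 := by rw [ht, div_lt_one hdenpos]; nlinarith
  refine ⟨t, ht0, ht1, ?_⟩
  have hbern : 1 + (↑(dd-1) : ℝ) * (-t) ≤ (1 + (-t))^(dd-1) :=
    one_add_mul_le_pow (by nlinarith) (dd-1)
  have hcast : ((dd-1 : ℕ) : ℝ) = D := by rw [hD, Nat.cast_sub hd, Nat.cast_one]
  rw [hcast] at hbern
  have hbern' : 1 - D*t ≤ (1-t)^(dd-1) := by
    calc 1 - D*t = 1 + D * (-t) := by ring
      _ ≤ (1 + (-t))^(dd-1) := hbern
      _ = (1-t)^(dd-1) := by ring_nf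
  have heq : D*(g-1)*t * den = D*(g-1)*(g-dd) := by
    rw [ht]; field_simp
  have hkey : D * (g-1) * t < g - dd := by nlinarith [sq_nonneg (g-dd)]
  have hpos2 : 0 < 1 - t + t*g := by nlinarith
  have hstep : (1 - D*t) * (1 - t + t*g) ≤ (1-t)^(dd-1) * (1 - t + t*g) :=
    mul_le_mul_of_nonneg_right hbern' (le_of_lt hpos2)
  have hddD : (dd:ℝ) = D + 1 := by rw [hD]; ring
  nlinarith [hstep, hkey, ht0, mul_pos ht0 ht0]

private lemma Mq_psd {m d : ℕ} (X : Matrix (Fin m) (Fin d) ℝ) (c : Fin m → ℝ)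
    (hc : ∀ k, 0 ≤ c k) : (Xᵀ * Matrix.diagonal c * X).PosSemidef := by
  set s : Fin m → ℝ := fun k => Real.sqrt (c k) with hs
  have key : Xᵀ * Matrix.diagonal c * X =
      (Matrix.diagonal s * X)ᴴ * (Matrix.diagonal s * X) := by
    rw [conjTranspose_mul, conjTranspose_eq_transpose_of_trivial,
      conjTranspose_eq_transpose_of_trivial, diagonal_transpose,
      ← Matrix.mul_assoc (Xᵀ * diagonal s) (diagonal s) X,
      Matrix.mul_assoc Xᵀ (diagonal s) (diagonal s), diagonal_mul_diagonal]
    congr 2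
    apply congrArg
    funext k
    exact (Real.mul_self_sqrt (hc k)).symm
  rw [key]
  exact posSemidef_conjTranspose_mul_self _

private lemma trace_formula {m d : ℕ} (X : Matrix (Fin m) (Fin d) ℝ)
    (N : Matrix (Fin d) (Fin d) ℝ) (c : Fin m → ℝ) :
    (N * (Xᵀ * Matrix.diagonal c * X)).trace = ∑ k, c k * (X k ⬝ᵥ (N *ᵥ X k)) := by
  have h3 : ∀ k, (X * N * Xᵀ) k k = X k ⬝ᵥ (N *ᵥ X k) := by
    intro k
    simp only [mul_apply, transpose_apply, dotProduct, mulVec, Finset.sum_mul, Finset.mul_sum]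
    rw [Finset.sum_comm]
    exact Finset.sum_congr rfl fun a _ => Finset.sum_congr rfl fun b _ => by ring
  have h1 : N * (Xᵀ * Matrix.diagonal c * X) = (N * Xᵀ * Matrix.diagonal c) * X := by
    rw [← Matrix.mul_assoc, ← Matrix.mul_assoc]
  rw [h1, trace_mul_comm]
  have h2 : X * (N * Xᵀ * Matrix.diagonal c) = (X * N * Xᵀ) * Matrix.diagonal c := by
    rw [← Matrix.mul_assoc, ← Matrix.mul_assoc]
  rw [h2]
  have h4 : ((X * N * Xᵀ) * Matrix.diagonal c).trace = ∑ k, (X * N * Xᵀ) k k * c k := by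
    simp [Matrix.trace, Matrix.diag, mul_diagonal]
  rw [h4]
  exact Finset.sum_congr rfl fun k _ => by rw [h3 k, mul_comm]

/-- Determinant along a segment toward a rank-one matrix. -/
private lemma det_seg_rank_one {d : ℕ} (hd : 0 < d) (A : Matrix (Fin d) (Fin d) ℝ)
    (hA : IsUnit A.det) (y : Fin d → ℝ) {t : ℝ} (ht1 : t ≠ 1) :
    ((1-t) • A + t • (Matrix.replicateCol Unit y * Matrix.replicateRow Unit y)).det
      = A.det * ((1-t)^(d-1) * ((1-t) + t * (y ⬝ᵥ (A⁻¹ *ᵥ y)))) := by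
  have h1t : (1:ℝ) - t ≠ 0 := sub_ne_zero.2 (Ne.symm ht1)
  have h1 : (1-t) • A + t • (Matrix.replicateCol Unit y * Matrix.replicateRow Unit y)
      = A * ((1-t) • (1 : Matrix (Fin d) (Fin d) ℝ)
          + Matrix.replicateCol Unit (t • (A⁻¹ *ᵥ y)) * Matrix.replicateRow Unit y) := by
    rw [mul_add, mul_smul_comm, mul_one]
    congr 1
    rw [← Matrix.mul_assoc, ← replicateCol_mulVec, mulVec_smul, mulVec_mulVec,
      Matrix.mul_nonsing_inv _ hA, one_mulVec, replicateCol_smul, Matrix.smul_mul]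
  have h2 : (1-t) • (1 : Matrix (Fin d) (Fin d) ℝ)
      + Matrix.replicateCol Unit (t • (A⁻¹ *ᵥ y)) * Matrix.replicateRow Unit y
      = (1-t) • ((1 : Matrix (Fin d) (Fin d) ℝ)
          + Matrix.replicateCol Unit ((t * (1-t)⁻¹) • (A⁻¹ *ᵥ y)) * Matrix.replicateRow Unit y) := by
    rw [smul_add]
    congr 1
    rw [← Matrix.smul_mul, ← replicateCol_smul, smul_smul]
    congr 2
    field_simp
  rw [h1, det_mul, h2, det_smul, det_one_add_replicateCol_mul_replicateRow, Fintype.card_fin]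
  have h3 : y ⬝ᵥ (t * (1-t)⁻¹) • (A⁻¹ *ᵥ y) = t * (1-t)⁻¹ * (y ⬝ᵥ (A⁻¹ *ᵥ y)) := by
    rw [dotProduct_smul, smul_eq_mul]
  rw [h3]
  have hpow : (1-t)^d = (1-t)^(d-1) * (1-t) := by
    conv_lhs => rw [show d = (d-1)+1 from (Nat.succ_pred_eq_of_pos hd).symm]
    rw [pow_succ]
  rw [hpow]
  field_simp

private lemma range_sig {m d : ℕ} (I : Finset (Fin m)) (hI : I.card = d) :
    Set.range (fun k : Fin d => ((I.orderIsoOfFin hI k : Fin m))) = ↑I := by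
  ext x
  constructor
  · rintro ⟨k, rfl⟩; exact (I.orderIsoOfFin hI k).2
  · intro hx
    exact ⟨(I.orderIsoOfFin hI).symm ⟨x, hx⟩, by simp⟩

private lemma sig_inj {m d : ℕ} (I : Finset (Fin m)) (hI : I.card = d) :
    Function.Injective (fun k : Fin d => ((I.orderIsoOfFin hI k : Fin m))) :=
  fun a b hab => (I.orderIsoOfFin hI).injective (Subtype.ext hab)

private lemma sum_sig {m d : ℕ} (I : Finset (Fin m)) (hI : I.card = d) (F : Fin m → ℝ) :
    ∑ j ∈ I, F j = ∑ k : Fin d, F (I.orderIsoOfFin hI k : Fin m) := by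
  rw [← Finset.sum_coe_sort I F]
  exact (Equiv.sum_comp (I.orderIsoOfFin hI).toEquiv (fun x : I => F (x : Fin m))).symm

private lemma sandwich_apply {m d : ℕ} (X : Matrix (Fin m) (Fin d) ℝ) (c : Fin m → ℝ)
    (a b : Fin d) :
    (Xᵀ * Matrix.diagonal c * X) a b = ∑ k, X k a * c k * X k b := by
  rw [mul_apply]
  refine Finset.sum_congr rfl fun k _ => ?_
  rw [mul_diagonal, transpose_apply]

private lemma Mp_eq {m d : ℕ} (X : Matrix (Fin m) (Fin d) ℝ) (w : Fin m → ℝ)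
    (I : Finset (Fin m)) (hI : I.card = d) :
    Xᵀ * Matrix.diagonal (fun k => (if k ∈ I then (d:ℝ)⁻¹ else 0) * w k) * X
      = (X.submatrix (fun k : Fin d => (I.orderIsoOfFin hI k : Fin m)) id)ᵀ *
        Matrix.diagonal (fun j : Fin d => (d:ℝ)⁻¹ * w (I.orderIsoOfFin hI j : Fin m)) *
        (X.submatrix (fun k : Fin d => (I.orderIsoOfFin hI k : Fin m)) id) := by
  ext a b
  rw [sandwich_apply, sandwich_apply]
  simp only [submatrix_apply, id]
  have hzero : ∀ k ∈ Finset.univ, k ∉ I →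
      X k a * ((if k ∈ I then (d:ℝ)⁻¹ else 0) * w k) * X k b = 0 := by
    intro k _ hk; simp [hk]
  rw [← Finset.sum_subset (Finset.subset_univ I) hzero]
  have hcong : ∑ k ∈ I, X k a * ((if k ∈ I then (d:ℝ)⁻¹ else 0) * w k) * X k b
      = ∑ k ∈ I, X k a * ((d:ℝ)⁻¹ * w k) * X k b :=
    Finset.sum_congr rfl fun k hk => by rw [if_pos hk]
  rw [hcong]
  exact sum_sig I hI (fun k => X k a * ((d:ℝ)⁻¹ * w k) * X k b)

private lemma quadform_eq {d : ℕ} (Y : Matrix (Fin d) (Fin d) ℝ) (e : Fin d → ℝ)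
    (he : ∀ j, e j ≠ 0) (xv : Fin d → ℝ) :
    xv ⬝ᵥ ((Yᵀ * Matrix.diagonal e * Y)⁻¹ *ᵥ xv)
      = ∑ j, (e j)⁻¹ * ((xv ᵥ* Y⁻¹) j) ^ 2 := by
  have hinv : (Matrix.diagonal e)⁻¹ = Matrix.diagonal (fun j => (e j)⁻¹) := by
    apply Matrix.inv_eq_right_inv
    rw [diagonal_mul_diagonal,
      show (fun j => e j * (e j)⁻¹) = fun _ => (1:ℝ) from funext fun j => mul_inv_cancel₀ (he j),
      diagonal_one]
  rw [Matrix.mul_inv_rev, Matrix.mul_inv_rev, hinv]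
  have hmv : (Y⁻¹ * ((Matrix.diagonal fun j => (e j)⁻¹) * (Yᵀ)⁻¹)) *ᵥ xv
      = Y⁻¹ *ᵥ ((Matrix.diagonal fun j => (e j)⁻¹) *ᵥ ((Yᵀ)⁻¹ *ᵥ xv)) := by
    rw [mulVec_mulVec, mulVec_mulVec, Matrix.mul_assoc]
  rw [hmv, dotProduct_mulVec]
  have hYt : (Yᵀ)⁻¹ *ᵥ xv = xv ᵥ* Y⁻¹ := by
    rw [← transpose_nonsing_inv, mulVec_transpose]
  rw [hYt]
  simp only [dotProduct, mulVec_diagonal]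
  exact Finset.sum_congr rfl fun j _ => by ring

private lemma vecMul_inv_eq {d : ℕ} (Y : Matrix (Fin d) (Fin d) ℝ) (hY : Y.det ≠ 0)
    (xv : Fin d → ℝ) (j : Fin d) :
    (xv ᵥ* Y⁻¹) j = (Y.updateRow j xv).det / Y.det := by
  have h := det_smul_inv_vecMul_eq_cramer_transpose Y xv (isUnit_iff_ne_zero.2 hY)
  have h2 := congrFun h j
  rw [Pi.smul_apply, smul_eq_mul, cramer_transpose_apply] at h2
  rw [eq_div_iff hY, mul_comm]
  exact h2

/-- det X[S]: the determinant of the square submatrix of X formed by the rows indexed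
by S (in increasing order); 0 if S does not have exactly d elements. -/
noncomputable def subdet (m d : ℕ) (X : Matrix (Fin m) (Fin d) ℝ) (S : Finset (Fin m)) : ℝ :=
  if h : S.card = d then
    (X.submatrix (fun k : Fin d => (S.orderIsoOfFin h k : Fin m)) id).det
  else 0

private lemma updateRow_det_sq {m d : ℕ} (X : Matrix (Fin m) (Fin d) ℝ)
    (I : Finset (Fin m)) (hI : I.card = d) {i : Fin m} (hi : i ∉ I) (k : Fin d) :
    ((X.submatrix (fun l : Fin d => ((I.orderIsoOfFin hI l : Fin m))) id).updateRow
        k (X i)).det ^ 2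
      = subdet m d X (insert i (I.erase ((I.orderIsoOfFin hI k : Fin m)))) ^ 2 := by
  set σ : Fin d → Fin m := fun l => ((I.orderIsoOfFin hI l : Fin m)) with hσdef
  have hσmem : ∀ l, σ l ∈ I := fun l => (I.orderIsoOfFin hI l).2
  set T : Finset (Fin m) := insert i (I.erase (σ k)) with hT
  have hiT : i ∉ I.erase (σ k) := fun h => hi (Finset.mem_of_mem_erase h)
  have hd : 0 < d := k.pos
  have hTcard : T.card = d := by
    rw [hT, Finset.card_insert_of_notMem hiT, Finset.card_erase_of_mem (hσmem k), hI]
    exact Nat.succ_pred_eq_of_pos hd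
  set τ : Fin d → Fin m := fun l => if l = k then i else σ l with hτdef
  have hτinj : Function.Injective τ := by
    intro a b hab
    simp only [hτdef] at hab
    by_cases ha : a = k <;> by_cases hb : b = k
    · rw [ha, hb]
    · rw [if_pos ha, if_neg hb] at hab
      exact absurd (show i ∈ I by rw [hab]; exact hσmem b) hi
    · rw [if_neg ha, if_pos hb] at hab
      exact absurd (show i ∈ I by rw [← hab]; exact hσmem a) hi
    · rw [if_neg ha, if_neg hb] at hab
      exact sig_inj I hI hab
  have hup : (X.submatrix σ id).updateRow k (X i) = X.submatrix τ id := by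
    ext l a
    by_cases hl : l = k
    · subst hl; simp [hτdef, updateRow_self]
    · simp [hτdef, updateRow_ne hl, hl]
  have hrange : Set.range (fun l : Fin d => ((T.orderIsoOfFin hTcard l : Fin m))) =
      Set.range τ := by
    rw [range_sig T hTcard, hT]
    ext x
    simp only [Finset.coe_insert, Set.mem_insert_iff, Finset.mem_coe, Finset.mem_erase,
      Set.mem_range]
    constructor
    · rintro (rfl | ⟨hxne, hxI⟩)
      · exact ⟨k, by simp [hτdef]⟩
      · obtain ⟨l, hl⟩ : ∃ l, σ l = x := by
          have hx : x ∈ Set.range σ := by rw [hσdef, range_sig I hI]; exact hxI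
          exact hx
        have hlk : l ≠ k := fun h => hxne (by rw [← hl, h])
        exact ⟨l, by simp [hτdef, hlk, hl]⟩
    · rintro ⟨l, rfl⟩
      by_cases hl : l = k
      · exact Or.inl (by simp [hτdef, hl])
      · refine Or.inr ⟨?_, ?_⟩
        · simp only [hτdef, if_neg hl]; exact fun h => hl (sig_inj I hI h)
        · simp only [hτdef, if_neg hl]; exact hσmem l
  have hsub : subdet m d X T = (X.submatrix
      (fun l : Fin d => ((T.orderIsoOfFin hTcard l : Fin m))) id).det := by
    rw [subdet, dif_pos hTcard]
  rw [hup, hsub]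
  exact sq_det_submatrix_eq X (sig_inj T hTcard) hτinj hrange

/-- The saturated design p_I (uniform weight 1/d on I, |I| = d, det X[I] ≠ 0) is
D-optimal iff for each i ∉ I, ∑_{j∈I} det(X[{i}∪I∖{j}])²/wⱼ ≤ det(X[I])²/wᵢ. -/
theorem saturated_D_optimal_iff (m d : ℕ) (X : Matrix (Fin m) (Fin d) ℝ)
    (w : Fin m → ℝ) (hw : ∀ k, 0 < w k) (I : Finset (Fin m)) (hI : I.card = d)
    (hdet : subdet m d X I ≠ 0) :
    IsMaxOn (fdet m d X w) {q : Fin m → ℝ | (∀ k, 0 ≤ q k) ∧ ∑ k, q k = 1}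
        (fun j => if j ∈ I then ((d : ℝ))⁻¹ else 0) ↔
      ∀ i ∉ I,
        ∑ j ∈ I, (subdet m d X (insert i (I.erase j))) ^ 2 / w j ≤
          (subdet m d X I) ^ 2 / w i := by
  classical
  rcases Nat.eq_zero_or_pos d with hd0 | hd
  · subst hd0
    constructor
    · intro _ i _
      have hI0 : I = ∅ := Finset.card_eq_zero.1 hI
      rw [hI0, Finset.sum_empty]
      exact div_nonneg (sq_nonneg _) (hw i).le
    · intro _
      rw [isMaxOn_iff]
      intro q _
      simp [fdet, Matrix.det_fin_zero]
  · set σ : Fin d → Fin m := fun k => ((I.orderIsoOfFin hI k : Fin m)) with hσdef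
    set Y : Matrix (Fin d) (Fin d) ℝ := X.submatrix σ id with hYdef
    have hsubI : subdet m d X I = Y.det := by
      rw [subdet, dif_pos hI, hYdef, hσdef]
    have hYdet : Y.det ≠ 0 := by rwa [hsubI] at hdet
    have hY2 : 0 < Y.det ^ 2 :=
      lt_of_le_of_ne (sq_nonneg _) (Ne.symm (pow_ne_zero 2 hYdet))
    have hdR : (0:ℝ) < d := by exact_mod_cast hd
    set ed : Fin d → ℝ := fun j => (d:ℝ)⁻¹ * w (σ j) with heddef
    have hedpos : ∀ j, 0 < ed j := fun j => by
      rw [heddef]; exact mul_pos (inv_pos.2 hdR) (hw _)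
    set A : Matrix (Fin d) (Fin d) ℝ := Yᵀ * Matrix.diagonal ed * Y with hAdef
    have hApsd : A.PosSemidef := by
      rw [hAdef]; exact Mq_psd Y ed (fun j => (hedpos j).le)
    have hAdetpos : 0 < A.det := by
      rw [hAdef, det_mul, det_mul, det_transpose, det_diagonal]
      have h1 : 0 < ∏ j, ed j := Finset.prod_pos fun j _ => hedpos j
      nlinarith [mul_pos hY2 h1]
    have hAunit : IsUnit A.det := isUnit_iff_ne_zero.2 hAdetpos.ne'
    have hMp : Xᵀ * Matrix.diagonal (fun k => (if k ∈ I then (d:ℝ)⁻¹ else 0) * w k) * X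
        = A := by
      rw [hAdef, hYdef, heddef, hσdef]
      exact Mp_eq X w I hI
    have hfp : fdet m d X w (fun j => if j ∈ I then (d:ℝ)⁻¹ else 0) = A.det := by
      simp only [fdet]
      rw [hMp]
    have hquad : ∀ i : Fin m, X i ⬝ᵥ (A⁻¹ *ᵥ X i)
        = ∑ k, (ed k)⁻¹ * ((X i ᵥ* Y⁻¹) k)^2 := fun i => by
      rw [hAdef]; exact quadform_eq Y ed (fun j => (hedpos j).ne') (X i)
    have hgv : ∀ i, w i * (X i ⬝ᵥ (A⁻¹ *ᵥ X i))
        = (d * w i / Y.det^2) * ∑ k, (Y.updateRow k (X i)).det^2 / w (σ k) := by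
      intro i
      rw [hquad i, Finset.mul_sum, Finset.mul_sum]
      refine Finset.sum_congr rfl fun k _ => ?_
      rw [vecMul_inv_eq Y hYdet (X i) k, heddef]
      have hwk : w (σ k) ≠ 0 := (hw _).ne'
      have hdne : (d:ℝ) ≠ 0 := hdR.ne'
      field_simp
    have hgv_nonneg : ∀ i, 0 ≤ w i * (X i ⬝ᵥ (A⁻¹ *ᵥ X i)) := by
      intro i
      rw [hgv i]
      exact mul_nonneg (div_nonneg (mul_nonneg hdR.le (hw i).le) (sq_nonneg _))
        (Finset.sum_nonneg fun k _ => div_nonneg (sq_nonneg _) (hw _).le)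
    have hmemI : ∀ i ∈ I, w i * (X i ⬝ᵥ (A⁻¹ *ᵥ X i)) = d := by
      intro i hiI
      obtain ⟨j0, hj0⟩ : ∃ j0, σ j0 = i := by
        have hx : i ∈ Set.range σ := by rw [hσdef, range_sig I hI]; exact hiI
        exact hx
      rw [hgv i]
      have h0 : ∀ k ∈ Finset.univ, k ≠ j0 →
          (Y.updateRow k (X i)).det^2 / w (σ k) = 0 := by
        intro k _ hk
        have hrow : (Y.updateRow k (X i)) k = (Y.updateRow k (X i)) j0 := by
          rw [updateRow_self, updateRow_ne (Ne.symm hk), ← hj0, hYdef]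
          rfl
        rw [det_zero_of_row_eq hk hrow]
        simp
      have h1 : j0 ∉ Finset.univ → (Y.updateRow j0 (X i)).det^2 / w (σ j0) = 0 :=
        fun h => absurd (Finset.mem_univ j0) h
      rw [Finset.sum_eq_single j0 h0 h1]
      have hXi : X i = Y j0 := by rw [← hj0, hYdef]; rfl
      rw [hXi, updateRow_eq_self, hj0]
      have hwine : w i ≠ 0 := (hw i).ne'
      field_simp
    have hbridge : ∀ i ∉ I,
        ((∑ j ∈ I, (subdet m d X (insert i (I.erase j))) ^ 2 / w j
            ≤ (subdet m d X I) ^ 2 / w i)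
          ↔ w i * (X i ⬝ᵥ (A⁻¹ *ᵥ X i)) ≤ (d:ℝ)) := by
      intro i hi
      have hLHS : ∑ j ∈ I, (subdet m d X (insert i (I.erase j)))^2 / w j
          = ∑ k, (Y.updateRow k (X i)).det^2 / w (σ k) := by
        rw [sum_sig I hI (fun j => (subdet m d X (insert i (I.erase j)))^2 / w j)]
        refine Finset.sum_congr rfl fun k _ => ?_
        rw [← updateRow_det_sq X I hI hi k, hYdef, hσdef]
      rw [hLHS, hsubI, hgv i]
      have hwi := hw i
      constructor
      · intro h
        rw [div_mul_eq_mul_div, div_le_iff₀ hY2]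
        rw [le_div_iff₀ hwi] at h
        nlinarith
      · intro h
        rw [div_mul_eq_mul_div, div_le_iff₀ hY2] at h
        rw [le_div_iff₀ hwi]
        nlinarith
    constructor
    · -- optimality → condition
      intro hmax i hi
      rw [hbridge i hi]
      by_contra hcon
      push_neg at hcon
      obtain ⟨t, ht0, ht1, hgain⟩ := gain_ineq hd hcon
      set y : Fin d → ℝ := fun a => Real.sqrt (w i) * X i a with hydef
      set q : Fin m → ℝ := fun k =>
        (1-t) * (if k ∈ I then (d:ℝ)⁻¹ else 0) + t * (if k = i then 1 else 0) with hqdef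
      have hqmem : q ∈ {q : Fin m → ℝ | (∀ k, 0 ≤ q k) ∧ ∑ k, q k = 1} := by
        constructor
        · intro k
          rw [hqdef]
          have h1 : (0:ℝ) ≤ if k ∈ I then (d:ℝ)⁻¹ else 0 := by positivity
          have h2 : (0:ℝ) ≤ if k = i then (1:ℝ) else 0 := by positivity
          nlinarith
        · rw [hqdef, Finset.sum_add_distrib, ← Finset.mul_sum, ← Finset.mul_sum]
          have hsum1 : ∑ k, (if k ∈ I then (d:ℝ)⁻¹ else 0) = 1 := by
            rw [Finset.sum_ite_mem, Finset.univ_inter, Finset.sum_const, hI, nsmul_eq_mul]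
            exact mul_inv_cancel₀ hdR.ne'
          have hsum2 : ∑ k, (if k = i then (1:ℝ) else 0) = 1 := by simp
          rw [hsum1, hsum2]; ring
      have hrank1 : Xᵀ * Matrix.diagonal (fun k => ((if k = i then (1:ℝ) else 0)) * w k) * X
          = Matrix.replicateCol Unit y * Matrix.replicateRow Unit y := by
        ext a b
        rw [sandwich_apply]
        have hz : ∀ k ∈ Finset.univ, k ≠ i →
            X k a * ((if k = i then (1:ℝ) else 0) * w k) * X k b = 0 := by
          intro k _ hk; simp [hk]
        rw [Finset.sum_eq_single i hz (fun h => absurd (Finset.mem_univ i) h)]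
        have hcr : (Matrix.replicateCol Unit y * Matrix.replicateRow Unit y) a b = y a * y b := by
          simp [mul_apply]
        rw [hcr, if_pos rfl]
        simp only [hydef]
        have hss := Real.mul_self_sqrt (hw i).le
        have hrr : Real.sqrt (w i) * X i a * (Real.sqrt (w i) * X i b)
            = (Real.sqrt (w i) * Real.sqrt (w i)) * (X i a * X i b) := by ring
        rw [hrr, hss]
        ring
      have hdiag : (fun k => q k * w k)
          = fun k => (1-t) * ((if k ∈ I then (d:ℝ)⁻¹ else 0) * w k)
              + t * ((if k = i then (1:ℝ) else 0) * w k) := by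
        funext k; rw [hqdef]; ring
      have hdd : Matrix.diagonal (fun k => (1-t) * ((if k ∈ I then (d:ℝ)⁻¹ else 0) * w k)
              + t * ((if k = i then (1:ℝ) else 0) * w k))
          = (1-t) • Matrix.diagonal (fun k => (if k ∈ I then (d:ℝ)⁻¹ else 0) * w k)
            + t • Matrix.diagonal (fun k => (if k = i then (1:ℝ) else 0) * w k) := by
        rw [← diagonal_smul, ← diagonal_smul, ← diagonal_add]
        congr 1 <;> (apply congrArg; funext k; simp [smul_eq_mul])
      have hMq : Xᵀ * Matrix.diagonal (fun k => q k * w k) * X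
          = (1-t) • A + t • (Matrix.replicateCol Unit y * Matrix.replicateRow Unit y) := by
        rw [hdiag, hdd, Matrix.mul_add, Matrix.add_mul, Matrix.mul_smul, Matrix.smul_mul,
          Matrix.mul_smul, Matrix.smul_mul, hMp, hrank1]
      have hyquad : y ⬝ᵥ (A⁻¹ *ᵥ y) = w i * (X i ⬝ᵥ (A⁻¹ *ᵥ X i)) := by
        have hy' : y = Real.sqrt (w i) • (X i) := by funext a; rw [hydef]; rfl
        rw [hy', mulVec_smul, dotProduct_smul, smul_dotProduct, smul_eq_mul, smul_eq_mul,
          ← mul_assoc, Real.mul_self_sqrt (hw i).le]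
      have hdet_q := det_seg_rank_one hd A hAunit y (ne_of_lt ht1)
      have hfq : fdet m d X w q
          = A.det * ((1-t)^(d-1) * ((1-t) + t * (w i * (X i ⬝ᵥ (A⁻¹ *ᵥ X i))))) := by
        simp only [fdet]
        rw [hMq, hdet_q, hyquad]
      have hle := isMaxOn_iff.1 hmax q hqmem
      rw [hfq, hfp] at hle
      nlinarith [hAdetpos, hgain, hle]
    · -- condition → optimality
      intro hcond
      rw [isMaxOn_iff]
      intro q hq
      obtain ⟨hq0, hq1⟩ := hq
      have hB : (Xᵀ * Matrix.diagonal (fun k => q k * w k) * X).PosSemidef :=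
        Mq_psd X _ (fun k => mul_nonneg (hq0 k) (hw k).le)
      have hkey := det_le_det_mul_trace_pow hd hApsd hAdetpos hB
      have htr : (A⁻¹ * (Xᵀ * Matrix.diagonal (fun k => q k * w k) * X)).trace
          = ∑ k, (q k * w k) * (X k ⬝ᵥ (A⁻¹ *ᵥ X k)) := trace_formula X A⁻¹ _
      have hboundk : ∀ k, w k * (X k ⬝ᵥ (A⁻¹ *ᵥ X k)) ≤ (d:ℝ) := by
        intro k
        by_cases hk : k ∈ I
        · rw [hmemI k hk]
        · exact (hbridge k hk).1 (hcond k hk)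
      have htrle : (A⁻¹ * (Xᵀ * Matrix.diagonal (fun k => q k * w k) * X)).trace ≤ d := by
        rw [htr]
        calc ∑ k, (q k * w k) * (X k ⬝ᵥ (A⁻¹ *ᵥ X k))
            = ∑ k, q k * (w k * (X k ⬝ᵥ (A⁻¹ *ᵥ X k))) :=
              Finset.sum_congr rfl fun k _ => by ring
          _ ≤ ∑ k, q k * d :=
              Finset.sum_le_sum fun k _ => mul_le_mul_of_nonneg_left (hboundk k) (hq0 k)
          _ = (∑ k, q k) * d := by rw [Finset.sum_mul]
          _ = d := by rw [hq1, one_mul]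
      have htrnn : 0 ≤ (A⁻¹ * (Xᵀ * Matrix.diagonal (fun k => q k * w k) * X)).trace := by
        rw [htr]
        refine Finset.sum_nonneg fun k _ => ?_
        have h1 := hgv_nonneg k
        have h2 := hq0 k
        have h3 := (hw k).le
        nlinarith [hw k]
      rw [hfp]
      calc fdet m d X w q = (Xᵀ * Matrix.diagonal (fun k => q k * w k) * X).det := by
            simp only [fdet]
        _ ≤ A.det * (((A⁻¹ * (Xᵀ * Matrix.diagonal (fun k => q k * w k) * X)).trace) / d)^d :=
            hkey
        _ ≤ A.det * 1 := by
            refine mul_le_mul_of_nonneg_left ?_ hAdetpos.le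
            refine pow_le_one₀ (div_nonneg htrnn hdR.le) ?_
            rw [div_le_one hdR]
            exact htrle
        _ = A.det := mul_one _
end

section
/- Let d = 4 and X be the 6×4 matrix with rows (1,1,1,1),(1,1,0,-2),(1,1,-1,1),(1,-1,1,1),(1,-1,0,-2),(1,-1,-1,1), and w_i > 0 with v_i = 1/w_i. The saturated design p_1 = p_2 = p_3 = p_4 = 1/4 (zero elsewhere) is D-optimal if and only if v_5 ≥ v_1 + v_2 + v_4 and v_6 ≥ v_1 + v_3 + v_4. -/
open Matrix

/-- 2×3 factorial design matrix with columns I, A, B_l, B_q. -/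
def X16 : Matrix (Fin 6) (Fin 4) ℝ :=
  !![1, 1, 1, 1; 1, 1, 0, -2; 1, 1, -1, 1; 1, -1, 1, 1; 1, -1, 0, -2; 1, -1, -1, 1]

lemma detFour (M : Matrix (Fin 4) (Fin 4) ℝ) :
    M.det =
      M 0 0 * (M 1 1 * (M 2 2 * M 3 3 - M 2 3 * M 3 2) - M 1 2 * (M 2 1 * M 3 3 - M 2 3 * M 3 1) + M 1 3 * (M 2 1 * M 3 2 - M 2 2 * M 3 1))
    - M 0 1 * (M 1 0 * (M 2 2 * M 3 3 - M 2 3 * M 3 2) - M 1 2 * (M 2 0 * M 3 3 - M 2 3 * M 3 0) + M 1 3 * (M 2 0 * M 3 2 - M 2 2 * M 3 0))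
    + M 0 2 * (M 1 0 * (M 2 1 * M 3 3 - M 2 3 * M 3 1) - M 1 1 * (M 2 0 * M 3 3 - M 2 3 * M 3 0) + M 1 3 * (M 2 0 * M 3 1 - M 2 1 * M 3 0))
    - M 0 3 * (M 1 0 * (M 2 1 * M 3 2 - M 2 2 * M 3 1) - M 1 1 * (M 2 0 * M 3 2 - M 2 2 * M 3 0) + M 1 2 * (M 2 0 * M 3 1 - M 2 1 * M 3 0)) := by
  simp [Matrix.det_succ_row_zero, Fin.sum_univ_succ,
    show (Fin.succ 2 : Fin 4) = 3 from rfl,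
    show Fin.succAbove (2 : Fin 4) 2 = 3 from rfl,
    show Fin.succAbove (1 : Fin 4) 2 = 3 from rfl,
    show (Fin.castSucc 2 : Fin 4) = 2 from rfl,
    show Fin.succAbove (3 : Fin 4) 2 = 2 from rfl]
  ring

set_option maxHeartbeats 1000000 in
lemma det_formula (q : Fin 6 → ℝ) :
    (X16ᵀ * Matrix.diagonal q * X16).det =
    144 * (q 0*q 1*q 2*q 3 + q 0*q 1*q 2*q 4 + q 0*q 1*q 2*q 5 + q 0*q 1*q 3*q 5
      + q 0*q 1*q 4*q 5 + q 0*q 2*q 3*q 4 + q 0*q 2*q 4*q 5 + q 0*q 3*q 4*q 5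
      + q 1*q 2*q 3*q 4 + q 1*q 2*q 3*q 5 + q 1*q 3*q 4*q 5 + q 2*q 3*q 4*q 5) := by
  have hE : ∀ i j, (X16ᵀ * Matrix.diagonal q * X16) i j
      = ∑ k, q k * (X16 k i * X16 k j) := by
    intro i j
    rw [Matrix.mul_apply]
    simp_rw [Matrix.mul_diagonal, Matrix.transpose_apply]
    apply Finset.sum_congr rfl
    intros; ring
  rw [detFour]
  simp only [hE, Fin.sum_univ_six]
  simp only [
    show X16 0 0 = 1 from rfl,
    show X16 0 1 = 1 from rfl,
    show X16 0 2 = 1 from rfl,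
    show X16 0 3 = 1 from rfl,
    show X16 1 0 = 1 from rfl,
    show X16 1 1 = 1 from rfl,
    show X16 1 2 = 0 from rfl,
    show X16 1 3 = (-2 : ℝ) from rfl,
    show X16 2 0 = 1 from rfl,
    show X16 2 1 = 1 from rfl,
    show X16 2 2 = (-1 : ℝ) from rfl,
    show X16 2 3 = 1 from rfl,
    show X16 3 0 = 1 from rfl,
    show X16 3 1 = (-1 : ℝ) from rfl,
    show X16 3 2 = 1 from rfl,
    show X16 3 3 = 1 from rfl,
    show X16 4 0 = 1 from rfl,
    show X16 4 1 = (-1 : ℝ) from rfl,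
    show X16 4 2 = 0 from rfl,
    show X16 4 3 = (-2 : ℝ) from rfl,
    show X16 5 0 = 1 from rfl,
    show X16 5 1 = (-1 : ℝ) from rfl,
    show X16 5 2 = (-1 : ℝ) from rfl,
    show X16 5 3 = 1 from rfl]
  ring

lemma det_vec (w : Fin 6 → ℝ) (a0 a1 a2 a3 a4 a5 : ℝ) :
    (X16ᵀ * Matrix.diagonal
      (fun i => (![a0,a1,a2,a3,a4,a5] : Fin 6 → ℝ) i * w i) * X16).det
    = 144 * (a0*w 0*(a1*w 1)*(a2*w 2)*(a3*w 3) + a0*w 0*(a1*w 1)*(a2*w 2)*(a4*w 4)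
      + a0*w 0*(a1*w 1)*(a2*w 2)*(a5*w 5) + a0*w 0*(a1*w 1)*(a3*w 3)*(a5*w 5)
      + a0*w 0*(a1*w 1)*(a4*w 4)*(a5*w 5) + a0*w 0*(a2*w 2)*(a3*w 3)*(a4*w 4)
      + a0*w 0*(a2*w 2)*(a4*w 4)*(a5*w 5) + a0*w 0*(a3*w 3)*(a4*w 4)*(a5*w 5)
      + a1*w 1*(a2*w 2)*(a3*w 3)*(a4*w 4) + a1*w 1*(a2*w 2)*(a3*w 3)*(a5*w 5)
      + a1*w 1*(a3*w 3)*(a4*w 4)*(a5*w 5) + a2*w 2*(a3*w 3)*(a4*w 4)*(a5*w 5)) := by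
  simp only [det_formula,
    show (![a0,a1,a2,a3,a4,a5] : Fin 6 → ℝ) 0 = a0 from rfl,
    show (![a0,a1,a2,a3,a4,a5] : Fin 6 → ℝ) 1 = a1 from rfl,
    show (![a0,a1,a2,a3,a4,a5] : Fin 6 → ℝ) 2 = a2 from rfl,
    show (![a0,a1,a2,a3,a4,a5] : Fin 6 → ℝ) 3 = a3 from rfl,
    show (![a0,a1,a2,a3,a4,a5] : Fin 6 → ℝ) 4 = a4 from rfl,
    show (![a0,a1,a2,a3,a4,a5] : Fin 6 → ℝ) 5 = a5 from rfl]

lemma sum_le_prod (q : Fin 6 → ℝ) (hq : ∀ i, 0 ≤ q i) :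
    q 0*q 1*q 2*q 3 + q 0*q 1*q 2*q 4 + q 0*q 1*q 2*q 5 + q 0*q 1*q 3*q 5
      + q 0*q 1*q 4*q 5 + q 0*q 2*q 3*q 4 + q 0*q 2*q 4*q 5 + q 0*q 3*q 4*q 5
      + q 1*q 2*q 3*q 4 + q 1*q 2*q 3*q 5 + q 1*q 3*q 4*q 5 + q 2*q 3*q 4*q 5
    ≤ (q 0 + q 4 + q 5) * (q 1 + q 4) * (q 2 + q 5) * (q 3 + q 4 + q 5) := by
  nlinarith [(mul_nonneg (hq 4) (pow_nonneg (hq 5) 3)),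
    (mul_nonneg (pow_nonneg (hq 4) 2) (pow_nonneg (hq 5) 2)),
    (mul_nonneg (pow_nonneg (hq 4) 3) (hq 5)),
    (mul_nonneg (mul_nonneg (hq 3) (hq 4)) (pow_nonneg (hq 5) 2)),
    (mul_nonneg (mul_nonneg (hq 3) (pow_nonneg (hq 4) 2)) (hq 5)),
    (mul_nonneg (mul_nonneg (hq 2) (hq 4)) (pow_nonneg (hq 5) 2)),
    (mul_nonneg (mul_nonneg (hq 2) (pow_nonneg (hq 4) 2)) (hq 5)),
    (mul_nonneg (hq 2) (pow_nonneg (hq 4) 3)),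
    (mul_nonneg (mul_nonneg (hq 2) (hq 3)) (pow_nonneg (hq 4) 2)),
    (mul_nonneg (hq 1) (pow_nonneg (hq 5) 3)),
    (mul_nonneg (mul_nonneg (hq 1) (hq 4)) (pow_nonneg (hq 5) 2)),
    (mul_nonneg (mul_nonneg (hq 1) (pow_nonneg (hq 4) 2)) (hq 5)),
    (mul_nonneg (mul_nonneg (hq 1) (hq 3)) (pow_nonneg (hq 5) 2)),
    (mul_nonneg (mul_nonneg (hq 1) (hq 2)) (pow_nonneg (hq 5) 2)),
    (mul_nonneg (mul_nonneg (mul_nonneg (hq 1) (hq 2)) (hq 4)) (hq 5)),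
    (mul_nonneg (mul_nonneg (hq 1) (hq 2)) (pow_nonneg (hq 4) 2)),
    (mul_nonneg (mul_nonneg (hq 0) (hq 4)) (pow_nonneg (hq 5) 2)),
    (mul_nonneg (mul_nonneg (hq 0) (pow_nonneg (hq 4) 2)) (hq 5)),
    (mul_nonneg (mul_nonneg (hq 0) (hq 2)) (pow_nonneg (hq 4) 2)),
    (mul_nonneg (mul_nonneg (hq 0) (hq 1)) (pow_nonneg (hq 5) 2))]

lemma amgm4 (a b c d : ℝ) (ha : 0 ≤ a) (hb : 0 ≤ b) (hc : 0 ≤ c) (hd : 0 ≤ d) :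
    a * b * c * d ≤ ((a + b + c + d)/4)^4 := by
  have h1 : a*b ≤ ((a+b)/2)^2 := by nlinarith [sq_nonneg (a-b)]
  have h2 : c*d ≤ ((c+d)/2)^2 := by nlinarith [sq_nonneg (c-d)]
  have hx : (0:ℝ) ≤ (a+b)/2 := by linarith
  have hy : (0:ℝ) ≤ (c+d)/2 := by linarith
  have hxy : (a+b)/2 * ((c+d)/2) ≤ ((a+b+c+d)/4)^2 := by
    nlinarith [sq_nonneg (a+b-(c+d))]
  calc a*b*c*d = a*b*(c*d) := by ring
    _ ≤ ((a+b)/2)^2 * ((c+d)/2)^2 :=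
        mul_le_mul h1 h2 (mul_nonneg hc hd) (sq_nonneg _)
    _ = ((a+b)/2 * ((c+d)/2))^2 := by ring
    _ ≤ (((a+b+c+d)/4)^2)^2 := by
        apply pow_le_pow_left₀ (mul_nonneg hx hy) hxy
    _ = ((a+b+c+d)/4)^4 := by ring

lemma inv3 (a b c e : ℝ) (ha : 0 < a) (hb : 0 < b) (hc : 0 < c) (he : 0 < e) :
    a⁻¹ + b⁻¹ + c⁻¹ ≤ e⁻¹ ↔ e*(b*c + a*c + a*b) ≤ a*b*c := by
  rw [show a⁻¹ + b⁻¹ + c⁻¹ = (b*c + a*c + a*b)/(a*b*c) by field_simp,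
    inv_eq_one_div, div_le_div_iff₀ (by positivity) he]
  constructor <;> intro h <;> nlinarith

lemma le_of_line (K A : ℝ) (hK : 0 < K)
    (h : ∀ t : ℝ, 0 ≤ t → t ≤ 1/2 →
      144*(((1-t)/4)^4*K + t*((1-t)/4)^3*A) ≤ 144*(K/256)) : A ≤ K := by
  by_contra hc
  push_neg at hc
  set e := A - K with he
  have he0 : 0 < e := by simp only [he]; linarith
  have hs : 0 < 2*e + 12*K := by linarith
  set t := e/(2*e + 12*K) with ht
  have ht0' : 0 < t := div_pos he0 hs
  have ht0 : 0 ≤ t := ht0'.le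
  have ht2 : t ≤ 1/2 := by rw [ht, div_le_iff₀ hs]; linarith
  have hKt : 12*K*t < e := by
    have h12 : 12*K*t = (12*K*e)/(2*e + 12*K) := by rw [ht]; ring
    rw [h12, div_lt_iff₀ hs]; nlinarith [mul_pos he0 he0]
  have hu : (1:ℝ)/8 ≤ (1-t)^3 := by
    have h12 : (0:ℝ) ≤ 1/2 - t := by linarith
    have hprod : (0:ℝ) ≤ (1/2 - t) * ((1-t)^2 + (1-t)/2 + 1/4) :=
      mul_nonneg h12 (by nlinarith [sq_nonneg (1-t)])
    nlinarith [hprod]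
  have h1 := h t ht0 ht2
  nlinarith [h1, mul_nonneg (mul_nonneg (sub_nonneg.2 hu) ht0) he0.le,
    mul_pos (sub_pos.2 hKt) ht0',
    mul_nonneg (mul_nonneg hK.le (pow_nonneg ht0 3)) (by linarith : (0:ℝ) ≤ 8 - 3*t)]

/-- The saturated design p₁ = p₂ = p₃ = p₄ = 1/4 is D-optimal iff
v₅ ≥ v₁ + v₂ + v₄ and v₆ ≥ v₁ + v₃ + v₄, where vᵢ = 1/wᵢ. -/
theorem saturated_2x3_factorial_example (w : Fin 6 → ℝ) (hw : ∀ i, 0 < w i) :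
    IsMaxOn (fun p : Fin 6 → ℝ =>
        (X16ᵀ * Matrix.diagonal (fun i => p i * w i) * X16).det)
      {p : Fin 6 → ℝ | (∀ i, 0 ≤ p i) ∧ ∑ i, p i = 1}
      (fun i => if i = 0 ∨ i = 1 ∨ i = 2 ∨ i = 3 then (4:ℝ)⁻¹ else 0) ↔
    ((w 4)⁻¹ ≥ (w 0)⁻¹ + (w 1)⁻¹ + (w 3)⁻¹ ∧
     (w 5)⁻¹ ≥ (w 0)⁻¹ + (w 2)⁻¹ + (w 3)⁻¹) := by
  have hw0 := hw 0; have hw1 := hw 1; have hw2 := hw 2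
  have hw3 := hw 3; have hw4 := hw 4; have hw5 := hw 5
  have hK : 0 < w 0 * w 1 * w 2 * w 3 := by positivity
  have hstar : (X16ᵀ * Matrix.diagonal
      (fun i => (if i = 0 ∨ i = 1 ∨ i = 2 ∨ i = 3 then (4:ℝ)⁻¹ else 0) * w i) * X16).det
      = 144 * ((w 0 * w 1 * w 2 * w 3)/256) := by
    rw [show (fun i : Fin 6 => (if i = 0 ∨ i = 1 ∨ i = 2 ∨ i = 3 then (4:ℝ)⁻¹ else 0) * w i)
        = (fun i => (![(4:ℝ)⁻¹,4⁻¹,4⁻¹,4⁻¹,0,0] : Fin 6 → ℝ) i * w i) from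
      funext fun i => by fin_cases i <;> rfl]
    rw [det_vec]
    ring
  constructor
  · intro hmax
    constructor
    · -- branch i = 4
      have hline : ∀ t : ℝ, 0 ≤ t → t ≤ 1/2 →
          144*(((1-t)/4)^4*(w 0*w 1*w 2*w 3)
            + t*((1-t)/4)^3*(w 4*(w 0*w 1*w 2 + w 0*w 2*w 3 + w 1*w 2*w 3)))
          ≤ 144*((w 0*w 1*w 2*w 3)/256) := by
        intro t h0 h2
        have hmem : (![(1-t)/4,(1-t)/4,(1-t)/4,(1-t)/4,t,0] : Fin 6 → ℝ)
            ∈ {p : Fin 6 → ℝ | (∀ i, 0 ≤ p i) ∧ ∑ i, p i = 1} := by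
          refine ⟨fun i => ?_, ?_⟩
          · fin_cases i
            · show (0:ℝ) ≤ (1-t)/4; linarith
            · show (0:ℝ) ≤ (1-t)/4; linarith
            · show (0:ℝ) ≤ (1-t)/4; linarith
            · show (0:ℝ) ≤ (1-t)/4; linarith
            · show (0:ℝ) ≤ t; linarith
            · show (0:ℝ) ≤ 0; exact le_rfl
          · rw [Fin.sum_univ_six]
            show (1-t)/4 + (1-t)/4 + (1-t)/4 + (1-t)/4 + t + 0 = 1
            ring
        have h1 := hmax hmem
        simp only [Set.mem_setOf_eq, det_vec, hstar] at h1
        linarith [h1]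
      have hA := le_of_line _ _ hK hline
      have h' : w 4 * (w 1*w 3 + w 0*w 3 + w 0*w 1) ≤ w 0*w 1*w 3 := by nlinarith
      exact (inv3 (w 0) (w 1) (w 3) (w 4) hw0 hw1 hw3 hw4).2 h'
    · -- branch i = 5
      have hline : ∀ t : ℝ, 0 ≤ t → t ≤ 1/2 →
          144*(((1-t)/4)^4*(w 0*w 1*w 2*w 3)
            + t*((1-t)/4)^3*(w 5*(w 0*w 1*w 2 + w 0*w 1*w 3 + w 1*w 2*w 3)))
          ≤ 144*((w 0*w 1*w 2*w 3)/256) := by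
        intro t h0 h2
        have hmem : (![(1-t)/4,(1-t)/4,(1-t)/4,(1-t)/4,0,t] : Fin 6 → ℝ)
            ∈ {p : Fin 6 → ℝ | (∀ i, 0 ≤ p i) ∧ ∑ i, p i = 1} := by
          refine ⟨fun i => ?_, ?_⟩
          · fin_cases i
            · show (0:ℝ) ≤ (1-t)/4; linarith
            · show (0:ℝ) ≤ (1-t)/4; linarith
            · show (0:ℝ) ≤ (1-t)/4; linarith
            · show (0:ℝ) ≤ (1-t)/4; linarith
            · show (0:ℝ) ≤ 0; exact le_rfl
            · show (0:ℝ) ≤ t; linarith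
          · rw [Fin.sum_univ_six]
            show (1-t)/4 + (1-t)/4 + (1-t)/4 + (1-t)/4 + 0 + t = 1
            ring
        have h1 := hmax hmem
        simp only [Set.mem_setOf_eq, det_vec, hstar] at h1
        linarith [h1]
      have hA := le_of_line _ _ hK hline
      have h' : w 5 * (w 2*w 3 + w 0*w 3 + w 0*w 2) ≤ w 0*w 2*w 3 := by nlinarith
      exact (inv3 (w 0) (w 2) (w 3) (w 5) hw0 hw2 hw3 hw5).2 h'
  · rintro ⟨h4, h5⟩ p hp
    obtain ⟨hp0, hp1⟩ := hp
    show (X16ᵀ * Matrix.diagonal (fun i => p i * w i) * X16).det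
      ≤ (X16ᵀ * Matrix.diagonal
        (fun i => (if i = 0 ∨ i = 1 ∨ i = 2 ∨ i = 3 then (4:ℝ)⁻¹ else 0) * w i) * X16).det
    rw [hstar]
    simp only [det_formula]
    set a : ℝ := (p 0*w 0 + p 4*w 4 + p 5*w 5)/w 0 with hadef
    set b : ℝ := (p 1*w 1 + p 4*w 4)/w 1 with hbdef
    set c : ℝ := (p 2*w 2 + p 5*w 5)/w 2 with hcdef
    set d : ℝ := (p 3*w 3 + p 4*w 4 + p 5*w 5)/w 3 with hddef
    have hpw : ∀ i, 0 ≤ p i * w i := fun i => mul_nonneg (hp0 i) (hw i).le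
    have ha : 0 ≤ a := div_nonneg (by have := hpw 0; have := hpw 4; have := hpw 5; linarith) hw0.le
    have hb : 0 ≤ b := div_nonneg (by have := hpw 1; have := hpw 4; linarith) hw1.le
    have hc : 0 ≤ c := div_nonneg (by have := hpw 2; have := hpw 5; linarith) hw2.le
    have hd : 0 ≤ d := div_nonneg (by have := hpw 3; have := hpw 4; have := hpw 5; linarith) hw3.le
    have hsum : a + b + c + d ≤ 1 := by
      have e4 : w 4 * ((w 0)⁻¹ + (w 1)⁻¹ + (w 3)⁻¹) ≤ 1 := by
        have h := mul_le_mul_of_nonneg_left h4 hw4.le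
        rwa [mul_inv_cancel₀ hw4.ne'] at h
      have e5 : w 5 * ((w 0)⁻¹ + (w 2)⁻¹ + (w 3)⁻¹) ≤ 1 := by
        have h := mul_le_mul_of_nonneg_left h5 hw5.le
        rwa [mul_inv_cancel₀ hw5.ne'] at h
      have expand : a + b + c + d = p 0 + p 1 + p 2 + p 3
          + p 4*(w 4*((w 0)⁻¹ + (w 1)⁻¹ + (w 3)⁻¹))
          + p 5*(w 5*((w 0)⁻¹ + (w 2)⁻¹ + (w 3)⁻¹)) := by
        rw [hadef, hbdef, hcdef, hddef]; field_simp; ring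
      have b4 : p 4*(w 4*((w 0)⁻¹ + (w 1)⁻¹ + (w 3)⁻¹)) ≤ p 4 := by
        have h := mul_le_mul_of_nonneg_left e4 (hp0 4); linarith [h]
      have b5 : p 5*(w 5*((w 0)⁻¹ + (w 2)⁻¹ + (w 3)⁻¹)) ≤ p 5 := by
        have h := mul_le_mul_of_nonneg_left e5 (hp0 5); linarith [h]
      rw [Fin.sum_univ_six] at hp1
      linarith [expand, b4, b5]
    have hA : w 0 * a = p 0*w 0 + p 4*w 4 + p 5*w 5 := by
      rw [hadef]; field_simp
    have hB : w 1 * b = p 1*w 1 + p 4*w 4 := by rw [hbdef]; field_simp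
    have hC : w 2 * c = p 2*w 2 + p 5*w 5 := by rw [hcdef]; field_simp
    have hD : w 3 * d = p 3*w 3 + p 4*w 4 + p 5*w 5 := by rw [hddef]; field_simp
    have key := sum_le_prod (fun i => p i * w i) hpw
    have key2 : (p 0*w 0 + p 4*w 4 + p 5*w 5) * (p 1*w 1 + p 4*w 4)
        * (p 2*w 2 + p 5*w 5) * (p 3*w 3 + p 4*w 4 + p 5*w 5)
        = (w 0*w 1*w 2*w 3) * (a*b*c*d) := by
      rw [← hA, ← hB, ← hC, ← hD]; ring
    have habcd : a*b*c*d ≤ ((1:ℝ)/4)^4 := by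
      calc a*b*c*d ≤ ((a+b+c+d)/4)^4 := amgm4 a b c d ha hb hc hd
        _ ≤ ((1:ℝ)/4)^4 := by
            apply pow_le_pow_left₀ (by positivity)
            linarith
    have hfin : (w 0*w 1*w 2*w 3) * (a*b*c*d) ≤ (w 0*w 1*w 2*w 3) * ((1:ℝ)/4)^4 :=
      mul_le_mul_of_nonneg_left habcd hK.le
    linarith [key, key2, hfin]
end
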